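/- Let p be a prime with p ≡ 1 (mod 3) and p ≠ 7, 13. Suppose S = (x_1, …, x_k) is a sequence in Z_p such that at least three terms of S lie in U(p) (i.e., are nonzero). Then S is a U(p)^3-weighted zero-sum sequence. -/

import Mathlib

/-- A list `L` over `ZMod n` is an `A`-weighted zero-sum sequence if there are weights
`a₁, …, a_k ∈ A` (one per term) with `a₁x₁ + ⋯ + a_kx_k = 0`. -/
def IsWeightedZeroSum {n : ℕ} (A : Set (ZMod n)) (L : List (ZMod n)) : Prop :=
  ∃ a : List (ZMod n), a.length = L.length ∧ (∀ w ∈ a, w ∈ A) ∧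
    (List.zipWith (· * ·) a L).sum = 0

section Aux

open Finset

variable {p : ℕ} [Fact p.Prime]

lemma cube_of_chi_eq_one (χ : MulChar (ZMod p) ℂ) (h3 : orderOf χ = 3) {t : ZMod p}
    (ht : t ≠ 0) (h1 : χ t = 1) : ∃ u : ZMod p, u ≠ 0 ∧ u ^ 3 = t := by
  obtain ⟨g, hg⟩ := IsCyclic.exists_generator (α := (ZMod p)ˣ)
  have hχg : χ (g : ZMod p) ≠ 1 := by
    intro h
    have : χ = 1 := (MulChar.eq_iff hg χ 1).mpr (by simpa using h)
    rw [this] at h3; simp at h3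
  have hχg3 : (χ (g : ZMod p)) ^ 3 = 1 := by
    rw [← MulChar.pow_apply' χ (by norm_num) (g : ZMod p), ← h3, pow_orderOf_eq_one χ,
      MulChar.one_apply_coe g]
  have hord : orderOf (χ (g : ZMod p)) = 3 := by
    have hdvd : orderOf (χ (g : ZMod p)) ∣ 3 := orderOf_dvd_of_pow_eq_one hχg3
    rcases (Nat.prime_three).eq_one_or_self_of_dvd _ hdvd with h | h
    · exact absurd (orderOf_eq_one_iff.mp h) hχg
    · exact h
  have htu : IsUnit t := isUnit_iff_ne_zero.mpr ht
  obtain ⟨k, hk⟩ : ∃ k : ℕ, g ^ k = htu.unit := by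
    have := hg htu.unit
    rwa [← mem_powers_iff_mem_zpowers, Submonoid.mem_powers_iff] at this
  have hχt : (χ (g : ZMod p)) ^ k = 1 := by
    have : χ ((g : ZMod p) ^ k) = 1 := by
      rw [← Units.val_pow_eq_pow_val, hk, IsUnit.unit_spec, h1]
    rwa [map_pow] at this
  have h3k : 3 ∣ k := hord ▸ orderOf_dvd_of_pow_eq_one hχt
  obtain ⟨m, rfl⟩ := h3k
  refine ⟨((g ^ m : (ZMod p)ˣ) : ZMod p), Units.ne_zero _, ?_⟩
  rw [← Units.val_pow_eq_pow_val, ← pow_mul, Nat.mul_comm m 3, hk, IsUnit.unit_spec]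

lemma conj_jacobiSum (χ : MulChar (ZMod p) ℂ) :
    (starRingEnd ℂ) (jacobiSum χ χ) = jacobiSum χ⁻¹ χ⁻¹ := by
  simp only [jacobiSum, map_sum, map_mul]
  refine Finset.sum_congr rfl fun x _ ↦ ?_
  rw [← MulChar.star_apply', ← MulChar.star_apply']
  rfl

lemma norm_jacobiSum_self {χ : MulChar (ZMod p) ℂ} (hχ : χ ≠ 1) (hχ2 : χ * χ ≠ 1) :
    ‖jacobiSum χ χ‖ = Real.sqrt p := by
  have hchar : ringChar ℂ ≠ ringChar (ZMod p) := by
    rw [ringChar.eq_zero (R := ℂ), ZMod.ringChar_zmod_n]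
    exact fun h ↦ (Fact.out : p.Prime).ne_zero h.symm
  have h := jacobiSum_mul_jacobiSum_inv hchar hχ hχ hχ2
  rw [← conj_jacobiSum, Complex.mul_conj] at h
  have hcard : (Fintype.card (ZMod p) : ℂ) = (p : ℂ) := by rw [ZMod.card]
  rw [hcard] at h
  have : Complex.normSq (jacobiSum χ χ) = p := by exact_mod_cast h
  rw [← Complex.sq_norm] at this
  nlinarith [Real.sq_sqrt (by positivity : (0:ℝ) ≤ (p:ℝ)), norm_nonneg (jacobiSum χ χ),
    Real.sqrt_nonneg (p:ℝ)]

lemma key_count (hp3 : p % 3 = 1) (hp16 : 16 < p) (a b : ZMod p) (ha : a ≠ 0) (hb : b ≠ 0) :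
    ∃ u v : ZMod p, u ≠ 0 ∧ v ≠ 0 ∧ a * u ^ 3 + b * v ^ 3 = 1 := by
  by_contra hcon
  push_neg at hcon
  have hp : p.Prime := Fact.out
  -- a cubic character
  have hdvd : 3 ∣ Fintype.card (ZMod p) - 1 := by
    rw [ZMod.card]; omega
  obtain ⟨χ, hχord⟩ := MulChar.exists_mulChar_orderOf (ZMod p) hdvd
    (Complex.isPrimitiveRoot_exp 3 (by norm_num))
  have hχ3 : χ ^ 3 = 1 := hχord ▸ pow_orderOf_eq_one χ
  have hχ1 : χ ≠ 1 := by
    intro h; rw [h, orderOf_one] at hχord; norm_num at hχord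
  have hχχ : χ * χ ≠ 1 := by
    intro h
    have : orderOf χ ∣ 2 := orderOf_dvd_of_pow_eq_one (by rw [pow_two]; exact h)
    rw [hχord] at this; norm_num at this
  have hχ2ne : χ ^ 2 ≠ 1 := by rw [pow_two]; exact hχχ
  -- values are cube roots of unity
  have hval3 : ∀ {t : ZMod p}, t ≠ 0 → (χ t) ^ 3 = 1 := by
    intro t ht
    rw [← MulChar.pow_apply' χ (by norm_num) t, hχ3,
      MulChar.one_apply (isUnit_iff_ne_zero.mpr ht)]
  have hnorm1 : ∀ {t : ZMod p}, t ≠ 0 → ‖χ t‖ = 1 := by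
    intro t ht
    have h3 : ‖χ t‖ ^ 3 = 1 := by rw [← norm_pow, hval3 ht, norm_one]
    nlinarith [norm_nonneg (χ t), sq_nonneg (‖χ t‖ - 1), sq_nonneg (‖χ t‖ + 1)]
  have hsum0 : ∀ {t : ZMod p}, t ≠ 0 → χ t ≠ 1 → 1 + χ t + (χ t) ^ 2 = 0 := by
    intro t ht hne
    have := hval3 (t := t) ht
    have hfac : (χ t - 1) * (1 + χ t + (χ t) ^ 2) = 0 := by ring_nf; linear_combination this
    rcases mul_eq_zero.mp hfac with h | h
    · exact absurd (sub_eq_zero.mp h) hne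
    · exact h
  -- the big sum
  set T : ℂ := ∑ i ∈ range 3, ∑ j ∈ range 3,
      (χ ^ i) a⁻¹ * (χ ^ j) b⁻¹ * jacobiSum (χ ^ i) (χ ^ j) with hTdef
  -- Step A: T as a sum over x
  have hstepA : T = ∑ x : ZMod p,
      (∑ i ∈ range 3, (χ ^ i) (a⁻¹ * x)) * (∑ j ∈ range 3, (χ ^ j) (b⁻¹ * (1 - x))) := by
    rw [hTdef]
    have h1 : ∀ i j : ℕ, (χ ^ i) a⁻¹ * (χ ^ j) b⁻¹ * jacobiSum (χ ^ i) (χ ^ j)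
        = ∑ x : ZMod p, (χ ^ i) (a⁻¹ * x) * (χ ^ j) (b⁻¹ * (1 - x)) := by
      intro i j
      rw [jacobiSum, Finset.mul_sum]
      refine sum_congr rfl fun x _ ↦ ?_
      rw [map_mul, map_mul]; ring
    calc ∑ i ∈ range 3, ∑ j ∈ range 3, (χ ^ i) a⁻¹ * (χ ^ j) b⁻¹ * jacobiSum (χ ^ i) (χ ^ j)
        = ∑ i ∈ range 3, ∑ j ∈ range 3, ∑ x : ZMod p,
            (χ ^ i) (a⁻¹ * x) * (χ ^ j) (b⁻¹ * (1 - x)) := by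
          exact sum_congr rfl fun i _ ↦ sum_congr rfl fun j _ ↦ h1 i j
      _ = ∑ x : ZMod p, ∑ i ∈ range 3, ∑ j ∈ range 3,
            (χ ^ i) (a⁻¹ * x) * (χ ^ j) (b⁻¹ * (1 - x)) := by
          rw [show (∑ i ∈ range 3, ∑ j ∈ range 3, ∑ x : ZMod p,
              (χ ^ i) (a⁻¹ * x) * (χ ^ j) (b⁻¹ * (1 - x)))
              = ∑ i ∈ range 3, ∑ x : ZMod p, ∑ j ∈ range 3,
              (χ ^ i) (a⁻¹ * x) * (χ ^ j) (b⁻¹ * (1 - x)) from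
            sum_congr rfl fun i _ ↦ Finset.sum_comm ..]
          exact Finset.sum_comm ..
      _ = ∑ x : ZMod p,
          (∑ i ∈ range 3, (χ ^ i) (a⁻¹ * x)) * (∑ j ∈ range 3, (χ ^ j) (b⁻¹ * (1 - x))) := by
          refine sum_congr rfl fun x _ ↦ ?_
          rw [Finset.sum_mul_sum]
  -- helper: the inner 3-term sums
  have hexp : ∀ t : ZMod p, (∑ i ∈ range 3, (χ ^ i) t)
      = (1 : MulChar (ZMod p) ℂ) t + χ t + (χ t) ^ 2 := by
    intro t
    rw [show (3:ℕ) = 2 + 1 by rfl, Finset.sum_range_succ, Finset.sum_range_succ,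
      Finset.sum_range_one, pow_zero, pow_one, MulChar.pow_apply' χ (by norm_num) t]
  have hfac_zero : ∀ t : ZMod p, t ≠ 0 → χ t ≠ 1 →
      (∑ i ∈ range 3, (χ ^ i) t) = 0 := by
    intro t ht hne
    rw [hexp, MulChar.one_apply (isUnit_iff_ne_zero.mpr ht)]
    exact hsum0 ht hne
  have hfac_zero' : ∀ t : ZMod p, t = 0 → (∑ i ∈ range 3, (χ ^ i) t) = 0 := by
    intro t ht
    rw [hexp, ht, MulChar.map_zero, MulChar.map_zero]
    simp
  -- Step B : T = 0
  have hstepB : T = 0 := by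
    rw [hstepA]
    refine Finset.sum_eq_zero fun x _ ↦ ?_
    rcases eq_or_ne x 0 with rfl | hx
    · rw [hfac_zero' _ (by simp), zero_mul]
    rcases eq_or_ne (χ (a⁻¹ * x)) 1 with hone | hne
    swap
    · rw [hfac_zero _ (by simp [hx, ha]) hne, zero_mul]
    -- a⁻¹ x is a nonzero cube
    obtain ⟨u, hu0, hu3⟩ := cube_of_chi_eq_one χ hχord (by simp [hx, ha]) hone
    rcases eq_or_ne x 1 with rfl | hx1
    · rw [hfac_zero' (b⁻¹ * (1 - 1)) (by ring), mul_zero]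
    rcases eq_or_ne (χ (b⁻¹ * (1 - x))) 1 with hone2 | hne2
    · obtain ⟨v, hv0, hv3⟩ := cube_of_chi_eq_one χ hχord
        (by simp [sub_ne_zero.mpr (Ne.symm hx1), hb]) hone2
      exfalso
      refine hcon u v hu0 hv0 ?_
      have hxa : a * u ^ 3 = x := by
        rw [hu3]; field_simp
      have hxb : b * v ^ 3 = 1 - x := by
        rw [hv3]; field_simp
      rw [hxa, hxb]; ring
    · rw [hfac_zero _ (by simp [sub_ne_zero.mpr (Ne.symm hx1), hb]) hne2, mul_zero]
  -- Step C : explicit expansion and bound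
  have hpow2 : ∀ t : ZMod p, (χ ^ 2) t = (χ t) ^ 2 := fun t ↦ MulChar.pow_apply' χ two_ne_zero t
  have hinv2 : χ ^ 2 = χ⁻¹ := eq_inv_of_mul_eq_one_left (by rw [← pow_succ]; exact hχ3)
  have hm1ne : (-1 : ZMod p) ≠ 0 := neg_ne_zero.mpr one_ne_zero
  have hm1 : χ (-1) = 1 := by
    have h2 : (χ (-1)) ^ 2 = 1 := by
      rw [← map_pow]; norm_num
    have h3 := hval3 hm1ne
    linear_combination h3 - χ (-1) * h2
  have hA1 : (1 : MulChar (ZMod p) ℂ) a⁻¹ = 1 :=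
    MulChar.one_apply (isUnit_iff_ne_zero.mpr (inv_ne_zero ha))
  have hB1 : (1 : MulChar (ZMod p) ℂ) b⁻¹ = 1 :=
    MulChar.one_apply (isUnit_iff_ne_zero.mpr (inv_ne_zero hb))
  have hJ00 : jacobiSum (1 : MulChar (ZMod p) ℂ) 1 = (p : ℂ) - 2 := by
    rw [jacobiSum_one_one, ZMod.card]
  have hJ01 : jacobiSum (1 : MulChar (ZMod p) ℂ) χ = -1 := jacobiSum_one_nontrivial hχ1
  have hJ02 : jacobiSum (1 : MulChar (ZMod p) ℂ) (χ ^ 2) = -1 := jacobiSum_one_nontrivial hχ2ne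
  have hJ10 : jacobiSum χ (1 : MulChar (ZMod p) ℂ) = -1 := by rw [jacobiSum_comm]; exact hJ01
  have hJ20 : jacobiSum (χ ^ 2) (1 : MulChar (ZMod p) ℂ) = -1 := by
    rw [jacobiSum_comm]; exact hJ02
  have hJ12 : jacobiSum χ (χ ^ 2) = -1 := by
    rw [hinv2, jacobiSum_nontrivial_inv hχ1, hm1]
  have hJ21 : jacobiSum (χ ^ 2) χ = -1 := by rw [jacobiSum_comm]; exact hJ12
  set α : ℂ := χ a⁻¹ with hαdef
  set β : ℂ := χ b⁻¹ with hβdef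
  set J1 : ℂ := jacobiSum χ χ with hJ1def
  set J2 : ℂ := jacobiSum (χ ^ 2) (χ ^ 2) with hJ2def
  have hT9 : T = ((p : ℂ) - 2) +
      (-β - β ^ 2 - α + α * β * J1 - α * β ^ 2 - α ^ 2 - α ^ 2 * β + α ^ 2 * β ^ 2 * J2) := by
    rw [hTdef]
    rw [show (3:ℕ) = 2 + 1 from rfl]
    simp only [Finset.sum_range_succ, Finset.sum_range_zero, zero_add, pow_zero, pow_one]
    rw [hA1, hB1, hJ00, hJ01, hJ02, hJ10, hJ20, hJ12, hJ21, hpow2 a⁻¹, hpow2 b⁻¹]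
    ring
  have heq : ((p : ℂ) - 2) =
      -(-β - β ^ 2 - α + α * β * J1 - α * β ^ 2 - α ^ 2 - α ^ 2 * β + α ^ 2 * β ^ 2 * J2) := by
    linear_combination hstepB - hT9
  have hα1 : ‖α‖ = 1 := hnorm1 (inv_ne_zero ha)
  have hβ1 : ‖β‖ = 1 := hnorm1 (inv_ne_zero hb)
  have hJ1n : ‖J1‖ = Real.sqrt p := norm_jacobiSum_self hχ1 hχχ
  have hJ2n : ‖J2‖ = Real.sqrt p := by
    refine norm_jacobiSum_self hχ2ne ?_
    intro h
    apply hχ1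
    calc χ = χ ^ 3 * χ := by rw [hχ3, one_mul]
    _ = χ ^ 2 * χ ^ 2 := by rw [← pow_add, ← pow_succ]
    _ = 1 := h
  have hbound : ‖-β - β ^ 2 - α + α * β * J1 - α * β ^ 2 - α ^ 2 - α ^ 2 * β
      + α ^ 2 * β ^ 2 * J2‖ ≤ 6 + 2 * Real.sqrt p := by
    have e1 : ‖α * β * J1‖ = Real.sqrt p := by
      rw [norm_mul, norm_mul, hα1, hβ1, hJ1n]; ring
    have e2 : ‖α ^ 2 * β ^ 2 * J2‖ = Real.sqrt p := by
      rw [norm_mul, norm_mul, norm_pow, norm_pow, hα1, hβ1, hJ2n]; ring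
    calc ‖-β - β ^ 2 - α + α * β * J1 - α * β ^ 2 - α ^ 2 - α ^ 2 * β + α ^ 2 * β ^ 2 * J2‖
        ≤ ‖-β - β ^ 2 - α + α * β * J1 - α * β ^ 2 - α ^ 2 - α ^ 2 * β‖
          + ‖α ^ 2 * β ^ 2 * J2‖ := norm_add_le _ _
      _ ≤ (‖-β - β ^ 2 - α + α * β * J1 - α * β ^ 2 - α ^ 2‖ + ‖α ^ 2 * β‖)
          + ‖α ^ 2 * β ^ 2 * J2‖ := by gcongr; exact norm_sub_le _ _
      _ ≤ ((‖-β - β ^ 2 - α + α * β * J1 - α * β ^ 2‖ + ‖α ^ 2‖) + ‖α ^ 2 * β‖)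
          + ‖α ^ 2 * β ^ 2 * J2‖ := by gcongr; exact norm_sub_le _ _
      _ ≤ (((‖-β - β ^ 2 - α + α * β * J1‖ + ‖α * β ^ 2‖) + ‖α ^ 2‖) + ‖α ^ 2 * β‖)
          + ‖α ^ 2 * β ^ 2 * J2‖ := by gcongr; exact norm_sub_le _ _
      _ ≤ ((((‖-β - β ^ 2 - α‖ + ‖α * β * J1‖) + ‖α * β ^ 2‖) + ‖α ^ 2‖) + ‖α ^ 2 * β‖)
          + ‖α ^ 2 * β ^ 2 * J2‖ := by gcongr; exact norm_add_le _ _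
      _ ≤ (((((‖-β - β ^ 2‖ + ‖α‖) + ‖α * β * J1‖) + ‖α * β ^ 2‖) + ‖α ^ 2‖) + ‖α ^ 2 * β‖)
          + ‖α ^ 2 * β ^ 2 * J2‖ := by gcongr; exact norm_sub_le _ _
      _ ≤ ((((((‖-β‖ + ‖β ^ 2‖) + ‖α‖) + ‖α * β * J1‖) + ‖α * β ^ 2‖) + ‖α ^ 2‖) + ‖α ^ 2 * β‖)
          + ‖α ^ 2 * β ^ 2 * J2‖ := by gcongr; exact norm_sub_le _ _
      _ = 6 + 2 * Real.sqrt p := by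
          rw [e1, e2, norm_neg]
          simp only [norm_mul, norm_pow, hα1, hβ1]
          ring
  have hps : ‖((p : ℂ) - 2)‖ = (p : ℝ) - 2 := by
    have hcast : ((p : ℂ) - 2) = (((p : ℝ) - 2 : ℝ) : ℂ) := by push_cast; ring
    have hp2 : (2 : ℝ) ≤ (p : ℝ) := by
      have : (16 : ℕ) < p := hp16
      exact_mod_cast Nat.le_of_lt (by omega : 2 < p)
    rw [hcast, Complex.norm_real, Real.norm_eq_abs, abs_of_nonneg (by linarith)]
  have hfin : (p : ℝ) - 2 ≤ 6 + 2 * Real.sqrt p := by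
    rw [← hps, heq, norm_neg]
    exact hbound
  have hp17 : (17 : ℝ) ≤ (p : ℝ) := by exact_mod_cast (by omega : 17 ≤ p)
  nlinarith [Real.sq_sqrt (by positivity : (0:ℝ) ≤ (p:ℝ)), Real.sqrt_nonneg (p : ℝ),
    sq_nonneg (Real.sqrt (p : ℝ) - 4)]


lemma three_cubes (hp3 : p % 3 = 1) (hp16 : 16 < p) (x y z : ZMod p)
    (hx : x ≠ 0) (hy : y ≠ 0) (hz : z ≠ 0) (t : ZMod p) :
    ∃ u v w : ZMod p, u ≠ 0 ∧ v ≠ 0 ∧ w ≠ 0 ∧ x * u ^ 3 + y * v ^ 3 + z * w ^ 3 = t := by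
  have hndvd : ∀ k : ℕ, 0 < k → k < 17 → ((k : ZMod p) ≠ 0) := by
    intro k hk0 hk17 h
    have hdvd : p ∣ k := (ZMod.natCast_eq_zero_iff k p).mp h
    have := Nat.le_of_dvd hk0 hdvd
    omega
  have h7 : (7 : ZMod p) ≠ 0 := by exact_mod_cast hndvd 7 (by norm_num) (by norm_num)
  obtain ⟨w, hw0, hc⟩ : ∃ w : ZMod p, w ≠ 0 ∧ t - z * w ^ 3 ≠ 0 := by
    rcases eq_or_ne (t - z * 1 ^ 3) 0 with h1 | h1
    · have ht : t = z := by linear_combination h1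
      have h2 : (2 : ZMod p) ≠ 0 := by exact_mod_cast hndvd 2 (by norm_num) (by norm_num)
      refine ⟨2, h2, fun hh ↦ ?_⟩
      refine mul_ne_zero h7 hz ?_
      rw [ht] at hh
      linear_combination -hh
    · exact ⟨1, one_ne_zero, h1⟩
  obtain ⟨u, v, hu, hv, huv⟩ := key_count hp3 hp16 (x * (t - z * w ^ 3)⁻¹)
    (y * (t - z * w ^ 3)⁻¹) (mul_ne_zero hx (inv_ne_zero hc)) (mul_ne_zero hy (inv_ne_zero hc))
  refine ⟨u, v, w, hu, hv, hw0, ?_⟩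
  have h2 : x * u ^ 3 + y * v ^ 3 = t - z * w ^ 3 := by
    have hmul := congrArg (fun r : ZMod p ↦ r * (t - z * w ^ 3)) huv
    simp only [add_mul, one_mul] at hmul
    rw [mul_assoc x _ (u ^ 3), mul_assoc y _ (v ^ 3)] at hmul
    rw [mul_comm _ (u ^ 3), mul_comm _ (v ^ 3), ← mul_assoc, ← mul_assoc] at hmul
    rw [mul_assoc (x * u ^ 3), mul_assoc (y * v ^ 3), inv_mul_cancel₀ hc, mul_one, mul_one] at hmul
    exact hmul
  linear_combination h2

lemma weight_extend {n : ℕ} {M L : List (ZMod n)} (h : M.Sublist L) :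
    ∀ b : List (ZMod n), b.length = M.length →
    ∃ a : List (ZMod n), a.length = L.length ∧ (∀ w ∈ a, w ∈ b ∨ w = 1) ∧
      (List.zipWith (· * ·) a L).sum
        = (List.zipWith (· * ·) b M).sum + (L.sum - M.sum) := by
  induction h with
  | slnil => exact fun b hb ↦ ⟨[], rfl, by simp, by simp⟩
  | cons x hsub ih =>
      intro b hb
      obtain ⟨a, ha1, ha2, ha3⟩ := ih b hb
      refine ⟨1 :: a, by simp [ha1], ?_, ?_⟩
      · intro v hv
        rcases List.mem_cons.mp hv with rfl | hv'
        · exact Or.inr rfl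
        · exact ha2 v hv'
      · simp only [List.zipWith_cons_cons, List.sum_cons, ha3]
        ring
  | cons_cons x hsub ih =>
      intro b hb
      cases b with
      | nil => simp at hb
      | cons wt b' =>
        obtain ⟨a, ha1, ha2, ha3⟩ := ih b' (by simpa using hb)
        refine ⟨wt :: a, by simp [ha1], ?_, ?_⟩
        · intro v hv
          rcases List.mem_cons.mp hv with rfl | hv'
          · exact Or.inl (List.mem_cons_self)
          · rcases ha2 v hv' with h' | h'
            · exact Or.inl (List.mem_cons_of_mem _ h')
            · exact Or.inr h'
        · simp only [List.zipWith_cons_cons, List.sum_cons, ha3]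
          ring

end Aux

/-- Let `p` be a prime with `p ≡ 1 (mod 3)`, `p ≠ 7, 13`. Any sequence in
`Z_p` with at least three nonzero terms is a `U(p)³`-weighted zero-sum sequence. -/
theorem cubes_wzs_of_three_units (p : ℕ) (hp : p.Prime) (hmod : p % 3 = 1)
    (h7 : p ≠ 7) (h13 : p ≠ 13) (S : List (ZMod p))
    (hthree : ∃ T : List (ZMod p), T.Sublist S ∧ T.length = 3 ∧ ∀ x ∈ T, x ≠ 0) :
    IsWeightedZeroSum {x : ZMod p | ∃ u : (ZMod p)ˣ, (u : ZMod p) ^ 3 = x} S := by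
  haveI : Fact p.Prime := ⟨hp⟩
  have hp16 : 16 < p := by
    rcases Nat.lt_or_ge 16 p with h | h
    · exact h
    · exfalso
      interval_cases p <;> revert hmod h7 h13 <;> revert hp <;> decide
  obtain ⟨T, hTS, hT3, hTne⟩ := hthree
  obtain ⟨x, y, z, rfl⟩ := List.length_eq_three.mp hT3
  have hx : x ≠ 0 := hTne x (by simp)
  have hy : y ≠ 0 := hTne y (by simp)
  have hz : z ≠ 0 := hTne z (by simp)
  obtain ⟨u, v, w, hu, hv, hw, hsum⟩ :=
    three_cubes (p := p) hmod hp16 x y z hx hy hz (x + y + z - S.sum)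
  obtain ⟨a, ha1, ha2, ha3⟩ := weight_extend hTS [u ^ 3, v ^ 3, w ^ 3] (by simp)
  refine ⟨a, ha1, ?_, ?_⟩
  · intro q hq
    rcases ha2 q hq with hq' | rfl
    · simp only [List.mem_cons, List.not_mem_nil, or_false] at hq'
      rcases hq' with rfl | rfl | rfl
      · exact ⟨Units.mk0 u hu, rfl⟩
      · exact ⟨Units.mk0 v hv, rfl⟩
      · exact ⟨Units.mk0 w hw, rfl⟩
    · exact ⟨1, by simp⟩
  · rw [ha3]
    simp only [List.zipWith_cons_cons, List.zipWith_nil_left, List.zipWith_nil_right,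
      List.sum_cons, List.sum_nil]
    linear_combination hsum
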